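/- For two univariate skew-normal random variables X₁ ~ SN(μ₁, σ², δ₁) and X₂ ~ SN(μ₂, σ², δ₂) with the same scale σ, if μ₁ ≤ μ₂ and δ₁ ≤ δ₂ then X₁ is less than X₂ in the usual stochastic order, i.e., P(X₁ > t) ≤ P(X₂ > t) for all t ∈ ℝ. -/
import Mathlib


open MeasureTheory Real

/-- The standard normal density. -/
noncomputable def stdNormalPDF (z : ℝ) : ℝ := (Real.sqrt (2 * π))⁻¹ * Real.exp (-z ^ 2 / 2)

/-- The standard normal cumulative distribution function. -/
noncomputable def stdNormalCDF (z : ℝ) : ℝ := ∫ t in Set.Iic z, stdNormalPDF t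

/-- The density of the univariate skew-normal distribution `SN(μ, σ², δ)` with
location `μ`, scale `σ > 0` and parameter `δ ∈ (−σ, σ)`, expressed via
`α = δ / √(σ² − δ²)`. -/
noncomputable def snPDF (μ σ δ : ℝ) (x : ℝ) : ℝ :=
  (2 / σ) * stdNormalPDF ((x - μ) / σ) *
    stdNormalCDF ((δ / Real.sqrt (σ ^ 2 - δ ^ 2)) * ((x - μ) / σ))

lemma pdf_nonneg (z : ℝ) : 0 ≤ stdNormalPDF z := by
  unfold stdNormalPDF
  positivity

lemma pdf_eq (z : ℝ) : stdNormalPDF z = (Real.sqrt (2 * π))⁻¹ * Real.exp (-(1/2) * z ^ 2) := by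
  unfold stdNormalPDF; ring_nf

lemma pdf_even (z : ℝ) : stdNormalPDF (-z) = stdNormalPDF z := by
  unfold stdNormalPDF; ring_nf

lemma pdf_continuous : Continuous stdNormalPDF := by
  unfold stdNormalPDF
  fun_prop

lemma pdf_integrable : Integrable stdNormalPDF := by
  simp only [funext pdf_eq]
  exact (integrable_exp_neg_mul_sq (by norm_num : (0:ℝ) < 1/2)).const_mul _

lemma pdf_total : ∫ z, stdNormalPDF z = 1 := by
  simp only [funext pdf_eq]
  rw [MeasureTheory.integral_const_mul, integral_gaussian]
  rw [show π / (1/2) = 2 * π by ring]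
  rw [inv_mul_cancel₀]
  positivity

lemma cdf_nonneg (z : ℝ) : 0 ≤ stdNormalCDF z :=
  setIntegral_nonneg measurableSet_Iic (fun x _ => pdf_nonneg x)

lemma cdf_mono : Monotone stdNormalCDF := fun a b hab =>
  setIntegral_mono_set pdf_integrable.integrableOn
    (Filter.Eventually.of_forall fun x => pdf_nonneg x)
    (HasSubset.Subset.eventuallyLE (Set.Iic_subset_Iic.mpr hab))

lemma cdf_measurable : Measurable stdNormalCDF := cdf_mono.measurable

lemma cdf_add_ioi (z : ℝ) : stdNormalCDF z + ∫ x in Set.Ioi z, stdNormalPDF x = 1 := by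
  rw [← pdf_total]
  rw [stdNormalCDF, ← integral_add_compl measurableSet_Iic pdf_integrable, Set.compl_Iic]

lemma cdf_le_one (z : ℝ) : stdNormalCDF z ≤ 1 := by
  have := cdf_add_ioi z
  nlinarith [setIntegral_nonneg (μ := volume) (measurableSet_Ioi (a := z)) (fun x _ => pdf_nonneg x)]

lemma cdf_neg (z : ℝ) : stdNormalCDF (-z) = 1 - stdNormalCDF z := by
  have h : stdNormalCDF (-z) = ∫ x in Set.Ioi z, stdNormalPDF x := by
    rw [stdNormalCDF, show Set.Ioi z = Set.Ioi (-(-z)) by rw [neg_neg],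
      ← integral_comp_neg_Iic]
    exact setIntegral_congr_fun measurableSet_Iic (fun x _ => (pdf_even x).symm)
  have := cdf_add_ioi z
  linarith

noncomputable def myf (μ σ α : ℝ) (x : ℝ) : ℝ :=
  (2 / σ) * stdNormalPDF ((x - μ) / σ) * stdNormalCDF (α * ((x - μ) / σ))

lemma myf_nonneg (μ σ α : ℝ) (hσ : 0 < σ) (x : ℝ) : 0 ≤ myf μ σ α x :=
  mul_nonneg (mul_nonneg (by positivity) (pdf_nonneg _)) (cdf_nonneg _)

lemma myf_measurable (μ σ α : ℝ) : Measurable (myf μ σ α) := by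
  apply Measurable.mul
  · exact (measurable_const.mul (pdf_continuous.measurable.comp
      ((measurable_id.sub_const μ).div_const σ)))
  · exact cdf_measurable.comp (measurable_const.mul
      ((measurable_id.sub_const μ).div_const σ))

lemma gauss_integrable (μ σ : ℝ) (hσ : 0 < σ) :
    Integrable (fun x => (2 / σ) * stdNormalPDF ((x - μ) / σ)) := by
  have hb : (0:ℝ) < 1 / (2 * σ ^ 2) := by positivity
  have : (fun x => stdNormalPDF ((x - μ) / σ)) =
      fun x => (Real.sqrt (2 * π))⁻¹ * Real.exp (-(1 / (2 * σ ^ 2)) * (x - μ) ^ 2) := by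
    funext x
    rw [pdf_eq]
    congr 1
    rw [div_pow]
    ring
  refine Integrable.const_mul ?_ _
  rw [this]
  exact ((integrable_exp_neg_mul_sq hb).comp_sub_right μ).const_mul _

lemma myf_integrable (μ σ α : ℝ) (hσ : 0 < σ) : Integrable (myf μ σ α) := by
  apply Integrable.mono' (gauss_integrable μ σ hσ)
    (myf_measurable μ σ α).aestronglyMeasurable
  refine Filter.Eventually.of_forall fun x => ?_
  rw [Real.norm_eq_abs, abs_of_nonneg (myf_nonneg μ σ α hσ x)]
  unfold myf
  have h1 : 0 ≤ 2 / σ * stdNormalPDF ((x - μ) / σ) :=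
    mul_nonneg (by positivity) (pdf_nonneg _)
  nlinarith [cdf_le_one (α * ((x - μ) / σ)), cdf_nonneg (α * ((x - μ) / σ))]

lemma myf_reflect (μ σ α : ℝ) (x : ℝ) :
    myf μ σ α (2 * μ - x) =
      (2 / σ) * stdNormalPDF ((x - μ) / σ) * (1 - stdNormalCDF (α * ((x - μ) / σ))) := by
  unfold myf
  have h1 : (2 * μ - x - μ) / σ = -((x - μ) / σ) := by ring
  rw [h1, pdf_even, mul_neg, cdf_neg]

lemma key (μ σ α₁ α₂ : ℝ) (hσ : 0 < σ) (hα : α₁ ≤ α₂) (t : ℝ) :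
    ∫ x in Set.Ioi t, myf μ σ α₁ x ≤ ∫ x in Set.Ioi t, myf μ σ α₂ x := by
  set g : ℝ → ℝ := fun x => myf μ σ α₂ x - myf μ σ α₁ x with hg
  have hint : Integrable g := (myf_integrable μ σ α₂ hσ).sub (myf_integrable μ σ α₁ hσ)
  have hg_nonneg : ∀ x, μ ≤ x → 0 ≤ g x := by
    intro x hx
    have hy : 0 ≤ (x - μ) / σ := div_nonneg (by linarith) hσ.le
    have := cdf_mono (mul_le_mul_of_nonneg_right hα hy)
    have h1 : 0 ≤ 2 / σ * stdNormalPDF ((x - μ) / σ) :=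
      mul_nonneg (by positivity) (pdf_nonneg _)
    simp only [hg, myf]
    nlinarith
  have hg_odd : ∀ x, g (2 * μ - x) = -g x := by
    intro x
    show myf μ σ α₂ (2 * μ - x) - myf μ σ α₁ (2 * μ - x) =
      -(myf μ σ α₂ x - myf μ σ α₁ x)
    rw [myf_reflect, myf_reflect]
    simp only [myf]
    ring
  rw [← sub_nonneg, ← integral_sub (myf_integrable μ σ α₂ hσ).integrableOn
    (myf_integrable μ σ α₁ hσ).integrableOn]
  rcases le_or_gt μ t with hμt | hμt
  · exact setIntegral_nonneg measurableSet_Ioi fun x hx => hg_nonneg x (hμt.trans hx.le)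
  · set b := 2 * μ - t with hb
    have htb : t ≤ b := by simp only [hb]; linarith
    have hsplit : Set.Ioi t = Set.Ioc t b ∪ Set.Ioi b := (Set.Ioc_union_Ioi_eq_Ioi htb).symm
    rw [hsplit, setIntegral_union (Set.Ioc_disjoint_Ioi le_rfl) measurableSet_Ioi
      hint.integrableOn hint.integrableOn]
    have h2 : 0 ≤ ∫ x in Set.Ioi b, g x :=
      setIntegral_nonneg measurableSet_Ioi fun x hx => hg_nonneg x (by
        simp only [hb] at hx ⊢
        have : 2 * μ - t < x := hx
        linarith)
    have h1 : (∫ x in Set.Ioc t b, g x) = 0 := by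
      rw [← intervalIntegral.integral_of_le htb]
      have hc : (∫ x in t..b, g (2 * μ - x)) = ∫ x in t..b, g x := by
        rw [intervalIntegral.integral_comp_sub_left g (2 * μ)]
        simp only [hb]
        congr 1 <;> ring
      have hc2 : (∫ x in t..b, g (2 * μ - x)) = -∫ x in t..b, g x := by
        simp only [hg_odd]
        exact intervalIntegral.integral_neg
      linarith
    linarith

lemma amono (σ a b : ℝ) (ha1 : -σ < a) (ha2 : a < σ) (hb1 : -σ < b) (hb2 : b < σ)
    (hab : a ≤ b) :
    a / Real.sqrt (σ ^ 2 - a ^ 2) ≤ b / Real.sqrt (σ ^ 2 - b ^ 2) := by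
  have hσ : 0 < σ := by linarith
  have hsa : 0 < σ ^ 2 - a ^ 2 := by nlinarith
  have hsb : 0 < σ ^ 2 - b ^ 2 := by nlinarith
  have hra : 0 < Real.sqrt (σ ^ 2 - a ^ 2) := Real.sqrt_pos.mpr hsa
  have hrb : 0 < Real.sqrt (σ ^ 2 - b ^ 2) := Real.sqrt_pos.mpr hsb
  rcases le_or_gt 0 a with h0a | h0a
  · rw [div_le_div_iff₀ hra hrb]
    have hsq : Real.sqrt (σ ^ 2 - b ^ 2) ≤ Real.sqrt (σ ^ 2 - a ^ 2) :=
      Real.sqrt_le_sqrt (by nlinarith)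
    exact mul_le_mul hab hsq hrb.le (le_trans h0a hab)
  · rcases le_or_gt 0 b with h0b | h0b
    · exact le_trans (div_neg_of_neg_of_pos h0a hra).le (div_nonneg h0b hrb.le)
    · rw [div_le_div_iff₀ hra hrb]
      have hsq : Real.sqrt (σ ^ 2 - a ^ 2) ≤ Real.sqrt (σ ^ 2 - b ^ 2) :=
        Real.sqrt_le_sqrt (by nlinarith)
      nlinarith [mul_le_mul hsq (neg_le_neg hab) (by linarith) hrb.le]

lemma shift (μ σ α c t : ℝ) (hσ : 0 < σ) (hc : 0 ≤ c) :
    ∫ x in Set.Ioi t, myf μ σ α x ≤ ∫ x in Set.Ioi t, myf (μ + c) σ α x := by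
  have h1 : ∀ x, myf (μ + c) σ α x = myf μ σ α (x - c) := by
    intro x
    simp only [myf]
    congr 2 <;> ring_nf
  simp only [h1]
  have hMP : MeasurePreserving (fun x : ℝ => x + -c) volume volume :=
    measurePreserving_add_right volume (-c)
  have hemb : MeasurableEmbedding (fun x : ℝ => x + -c) :=
    (Homeomorph.addRight (-c)).measurableEmbedding
  have hpre : (fun x : ℝ => x + -c) ⁻¹' Set.Ioi (t - c) = Set.Ioi t := by
    ext x
    simp only [Set.mem_preimage, Set.mem_Ioi]
    constructor <;> intro h <;> linarith
  have h2 : (∫ x in Set.Ioi t, myf μ σ α (x - c)) = ∫ x in Set.Ioi (t - c), myf μ σ α x := by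
    have := hMP.setIntegral_preimage_emb hemb (myf μ σ α) (Set.Ioi (t - c))
    rw [hpre] at this
    simpa [sub_eq_add_neg] using this
  rw [h2]
  exact setIntegral_mono_set (myf_integrable μ σ α hσ).integrableOn
    (Filter.Eventually.of_forall fun x => myf_nonneg μ σ α hσ x)
    (HasSubset.Subset.eventuallyLE (Set.Ioi_subset_Ioi (by linarith)))

/-- If `X₁ ~ SN(μ₁, σ², δ₁)` and `X₂ ~ SN(μ₂, σ², δ₂)` with the same scale `σ`,
`μ₁ ≤ μ₂` and `δ₁ ≤ δ₂`, then `X₁ ≤_st X₂`: the survival function of `X₁` is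
pointwise below that of `X₂`. -/
theorem stmt14 (μ₁ μ₂ σ δ₁ δ₂ : ℝ) (hσ : 0 < σ)
    (hδ₁ : -σ < δ₁ ∧ δ₁ < σ) (hδ₂ : -σ < δ₂ ∧ δ₂ < σ)
    (hμ : μ₁ ≤ μ₂) (hδ : δ₁ ≤ δ₂) :
    ∀ t : ℝ, ∫ x in Set.Ioi t, snPDF μ₁ σ δ₁ x ≤ ∫ x in Set.Ioi t, snPDF μ₂ σ δ₂ x := by
  intro t
  have e : ∀ μ δ, snPDF μ σ δ = myf μ σ (δ / Real.sqrt (σ ^ 2 - δ ^ 2)) := fun _ _ => rfl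
  rw [e, e]
  calc ∫ x in Set.Ioi t, myf μ₁ σ (δ₁ / Real.sqrt (σ ^ 2 - δ₁ ^ 2)) x
      ≤ ∫ x in Set.Ioi t, myf μ₁ σ (δ₂ / Real.sqrt (σ ^ 2 - δ₂ ^ 2)) x :=
        key μ₁ σ _ _ hσ (amono σ δ₁ δ₂ hδ₁.1 hδ₁.2 hδ₂.1 hδ₂.2 hδ) t
    _ ≤ ∫ x in Set.Ioi t, myf (μ₁ + (μ₂ - μ₁)) σ (δ₂ / Real.sqrt (σ ^ 2 - δ₂ ^ 2)) x :=
        shift μ₁ σ _ (μ₂ - μ₁) t hσ (by linarith)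
    _ = ∫ x in Set.Ioi t, myf μ₂ σ (δ₂ / Real.sqrt (σ ^ 2 - δ₂ ^ 2)) x := by
        rw [show μ₁ + (μ₂ - μ₁) = μ₂ by ring]
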